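/- Let W₁ and W₂ be closed half-spaces in ℝ³ whose boundary planes Π₁ and Π₂ are distinct and intersect in a line L, and suppose 0 lies in the interior of W₁ ∩ W₂. Let q ∈ L, let oᵢ be the orthogonal projection of 0 onto Πᵢ, and suppose for i = 1, 2 that q − oᵢ is not parallel to L (in particular q ≠ oᵢ). Then it is impossible that both: q + ε₁·(q − o₁) ∈ W₂ for some ε₁ > 0, and q + ε₂·(q − o₂) ∈ W₁ for some ε₂ > 0. (This is the claim in Case 3 of the proof of the extended-gradient theorem that at any boundary point of a convex polyhedron at most one face can have its in-face gradient of the distance function as a tangent vector.) -/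

import Mathlib

open scoped RealInnerProductSpace

set_option maxHeartbeats 1000000 in
/-- let `W₁, W₂` be closed half-spaces in `ℝ³` with distinct boundary planes
`B₁, B₂` meeting in a line `L = B₁ ∩ B₂`, with `0 ∈ int (W₁ ∩ W₂)`. Let `q ∈ L`, let `oᵢ`
be the orthogonal projection of `0` onto `Bᵢ`, and suppose `q - oᵢ` is not parallel to `L`
(expressed as `⟪n₂, q - o₁⟫ ≠ 0` and `⟪n₁, q - o₂⟫ ≠ 0`, since `q - oᵢ` lies in the
direction of `Bᵢ`). Then it is impossible that both in-face gradient directions point into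
the wedge: `q + ε₁ • (q - o₁) ∈ W₂` and `q + ε₂ • (q - o₂) ∈ W₁` for some `ε₁, ε₂ > 0`. -/
theorem not_both_inface_gradients_tangent
    (n₁ n₂ : EuclideanSpace ℝ (Fin 3)) (c₁ c₂ : ℝ) (hn₁ : n₁ ≠ 0) (hn₂ : n₂ ≠ 0)
    (W₁ W₂ B₁ B₂ : Set (EuclideanSpace ℝ (Fin 3)))
    (hW₁ : W₁ = {x | ⟪n₁, x⟫ ≤ c₁}) (hW₂ : W₂ = {x | ⟪n₂, x⟫ ≤ c₂})
    (hB₁ : B₁ = {x | ⟪n₁, x⟫ = c₁}) (hB₂ : B₂ = {x | ⟪n₂, x⟫ = c₂})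
    (hne : B₁ ≠ B₂) (hmeet : (B₁ ∩ B₂).Nonempty)
    (h0 : (0 : EuclideanSpace ℝ (Fin 3)) ∈ interior (W₁ ∩ W₂))
    (q : EuclideanSpace ℝ (Fin 3)) (hq : q ∈ B₁ ∩ B₂)
    -- `o₁` and `o₂` are the orthogonal projections of `0` onto `B₁` and `B₂`
    (o₁ o₂ : EuclideanSpace ℝ (Fin 3)) (ho₁ : o₁ ∈ B₁) (ho₂ : o₂ ∈ B₂)
    (hperp₁ : ∀ x ∈ B₁, ⟪(0 : EuclideanSpace ℝ (Fin 3)) - o₁, x - o₁⟫ = 0)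
    (hperp₂ : ∀ x ∈ B₂, ⟪(0 : EuclideanSpace ℝ (Fin 3)) - o₂, x - o₂⟫ = 0)
    -- `q - oᵢ` is not parallel to `L`
    (hpar₁ : ⟪n₂, q - o₁⟫ ≠ 0) (hpar₂ : ⟪n₁, q - o₂⟫ ≠ 0) :
    ¬ ((∃ ε₁ > (0 : ℝ), q + ε₁ • (q - o₁) ∈ W₂) ∧
       (∃ ε₂ > (0 : ℝ), q + ε₂ • (q - o₂) ∈ W₁)) := by
  subst hW₁ hW₂ hB₁ hB₂
  rintro ⟨⟨ε₁, hε₁, hm₁⟩, ε₂, hε₂, hm₂⟩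
  simp only [Set.mem_setOf_eq, Set.mem_inter_iff] at hq ho₁ ho₂ hm₁ hm₂
  have hn₁' : (0:ℝ) < ‖n₁‖ := norm_pos_iff.mpr hn₁
  have hn₂' : (0:ℝ) < ‖n₂‖ := norm_pos_iff.mpr hn₂
  have hA : (0:ℝ) < ‖n₁‖^2 := by positivity
  have hB : (0:ℝ) < ‖n₂‖^2 := by positivity
  -- positivity of c₁ and c₂
  obtain ⟨r, hr, hball⟩ := Metric.mem_nhds_iff.mp (mem_interior_iff_mem_nhds.mp h0)
  have hc₁ : 0 < c₁ := by
    have hx : (r / (2*‖n₁‖)) • n₁ ∈ Metric.ball (0:EuclideanSpace ℝ (Fin 3)) r := by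
      rw [Metric.mem_ball, dist_zero_right, norm_smul, Real.norm_eq_abs,
        abs_of_pos (by positivity)]
      have he : r / (2*‖n₁‖) * ‖n₁‖ = r / 2 := by field_simp
      rw [he]; linarith
    have h1 := (hball hx).1
    simp only [Set.mem_setOf_eq, real_inner_smul_right, real_inner_self_eq_norm_sq] at h1
    have hp : 0 < r / (2*‖n₁‖) * ‖n₁‖^2 := by positivity
    linarith
  have hc₂ : 0 < c₂ := by
    have hx : (r / (2*‖n₂‖)) • n₂ ∈ Metric.ball (0:EuclideanSpace ℝ (Fin 3)) r := by
      rw [Metric.mem_ball, dist_zero_right, norm_smul, Real.norm_eq_abs,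
        abs_of_pos (by positivity)]
      have he : r / (2*‖n₂‖) * ‖n₂‖ = r / 2 := by field_simp
      rw [he]; linarith
    have h1 := (hball hx).2
    simp only [Set.mem_setOf_eq, real_inner_smul_right, real_inner_self_eq_norm_sq] at h1
    have hp : 0 < r / (2*‖n₂‖) * ‖n₂‖^2 := by positivity
    linarith
  -- projection formulas
  have hproj : ∀ (n o : EuclideanSpace ℝ (Fin 3)) (c : ℝ), n ≠ 0 → ⟪n, o⟫ = c →
      (∀ x : EuclideanSpace ℝ (Fin 3), ⟪n, x⟫ = c → ⟪(0:EuclideanSpace ℝ (Fin 3)) - o, x - o⟫ = 0) →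
      o = (c / ‖n‖^2) • n := by
    intro n o c hn ho hperp
    have hA : (0:ℝ) < ‖n‖^2 := by
      have : (0:ℝ) < ‖n‖ := norm_pos_iff.mpr hn
      positivity
    set t : ℝ := c / ‖n‖^2 with ht
    have htA : t * ‖n‖^2 = c := div_mul_cancel₀ c (ne_of_gt hA)
    have hmem : ⟪n, o + (o - t • n)⟫ = c := by
      rw [inner_add_right, inner_sub_right, real_inner_smul_right,
        real_inner_self_eq_norm_sq, ho]
      linarith
    have hkey := hperp _ hmem
    rw [zero_sub, inner_neg_left, neg_eq_zero, add_sub_cancel_left] at hkey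
    have h2 : ⟪t • n, o - t • n⟫ = 0 := by
      rw [real_inner_smul_left, inner_sub_right, real_inner_smul_right,
        real_inner_self_eq_norm_sq, ho, htA]
      ring
    have h3 : ⟪o - t • n, o - t • n⟫ = 0 := by
      rw [inner_sub_left, hkey, h2, sub_zero]
    have h4 := inner_self_eq_zero.mp h3
    rw [sub_eq_zero] at h4
    exact h4
  have ho1f : o₁ = (c₁ / ‖n₁‖^2) • n₁ :=
    hproj n₁ o₁ c₁ hn₁ ho₁ (fun x hx => hperp₁ x hx)
  have ho2f : o₂ = (c₂ / ‖n₂‖^2) • n₂ :=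
    hproj n₂ o₂ c₂ hn₂ ho₂ (fun x hx => hperp₂ x hx)
  -- from membership, gradient directions have strictly negative inner products
  have hg₁ : ⟪n₂, q - o₁⟫ < 0 := by
    rw [inner_add_right, real_inner_smul_right, hq.2] at hm₁
    rcases lt_or_gt_of_ne hpar₁ with h | h
    · exact h
    · nlinarith
  have hg₂ : ⟪n₁, q - o₂⟫ < 0 := by
    rw [inner_add_right, real_inner_smul_right, hq.1] at hm₂
    rcases lt_or_gt_of_ne hpar₂ with h | h
    · exact h
    · nlinarith
  have e₁ : ⟪n₂, q - o₁⟫ = c₂ - c₁ / ‖n₁‖^2 * ⟪n₂, n₁⟫ := by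
    rw [inner_sub_right, ho1f, real_inner_smul_right, hq.2]
  have e₂ : ⟪n₁, q - o₂⟫ = c₁ - c₂ / ‖n₂‖^2 * ⟪n₂, n₁⟫ := by
    rw [inner_sub_right, ho2f, real_inner_smul_right, hq.1, real_inner_comm n₁ n₂]
  rw [e₁] at hg₁
  rw [e₂] at hg₂
  set s : ℝ := ⟪n₂, n₁⟫ with hsdef
  have hg₁' : c₂ * ‖n₁‖^2 < c₁ * s := by
    have h := mul_lt_mul_of_pos_right hg₁ hA
    have h2 : (c₂ - c₁ / ‖n₁‖^2 * s) * ‖n₁‖^2 = c₂ * ‖n₁‖^2 - c₁ * s := by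
      field_simp
    rw [h2] at h
    linarith
  have hg₂' : c₁ * ‖n₂‖^2 < c₂ * s := by
    have h := mul_lt_mul_of_pos_right hg₂ hB
    have h2 : (c₁ - c₂ / ‖n₂‖^2 * s) * ‖n₂‖^2 = c₁ * ‖n₂‖^2 - c₂ * s := by
      field_simp
    rw [h2] at h
    linarith
  have hcs : s^2 ≤ ‖n₁‖^2 * ‖n₂‖^2 := by
    have h := abs_real_inner_le_norm n₂ n₁
    nlinarith [abs_nonneg (⟪n₂, n₁⟫ : ℝ), sq_abs (⟪n₂, n₁⟫ : ℝ)]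
  have hspos : 0 < s := by nlinarith [mul_pos hc₂ hA]
  have key := mul_lt_mul'' hg₁' hg₂' (by positivity) (by positivity)
  nlinarith [mul_le_mul_of_nonneg_left hcs (mul_pos hc₁ hc₂).le]
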